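/- Let $d,q$ be positive integers and let $x_1\ge\cdots\ge x_d>0$ be real numbers with $\prod_{i=1}^l x_i \le 1 - q\sum_{i=1}^l x_i$ for every $1\le l\le d$ and $\sum_{i=1}^d x_i = \sum_{i=1}^d \frac{1}{1+u_{i,q}}$. Then $x_i = \frac{1}{1+u_{i,q}}$ for every $i$. -/

import Mathlib

open Finset

noncomputable def phin (Q : ℝ) : ℕ → ℝ → ℝ
  | 0, s => s
  | m+1, s => phin Q m (s^2/(s+Q))

noncomputable def psi (Q : ℝ) : ℕ → ℝ → ℝ → ℝ → ℝ
  | 0, _, t, _ => t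
  | m+1, p, t, b => psi Q m (p * min b (t/(p+Q))) (t - Q * min b (t/(p+Q))) (min b (t/(p+Q)))

section core
variable {Q : ℝ}

lemma phin_pos (hQ : 0 < Q) : ∀ m s, 0 < s → 0 < phin Q m s := by
  intro m
  induction m with
  | zero => intro s hs; simpa [phin] using hs
  | succ m ih =>
    intro s hs
    rw [phin]
    exact ih _ (div_pos (by positivity) (by positivity))

lemma phin_lt (hQ : 0 < Q) : ∀ m a b, 0 < a → a < b → phin Q m a < phin Q m b := by
  intro m
  induction m with
  | zero => intro a b _ h; simpa [phin] using h
  | succ m ih =>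
    intro a b ha hab
    rw [phin, phin]
    have hb : 0 < b := ha.trans hab
    refine ih _ _ (by positivity) ?_
    rw [div_lt_div_iff₀ (by positivity) (by positivity)]
    nlinarith [mul_pos (mul_pos ha hb) (sub_pos.mpr hab),
      mul_pos (mul_pos hQ (add_pos ha hb)) (sub_pos.mpr hab)]

lemma phin_le (hQ : 0 < Q) (m : ℕ) {a b : ℝ} (ha : 0 < a) (hab : a ≤ b) :
    phin Q m a ≤ phin Q m b := by
  rcases eq_or_lt_of_le hab with rfl | h
  · exact le_refl _
  · exact (phin_lt hQ m a b ha h).le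

lemma frac_mono (hQ : 0 < Q) {a b : ℝ} (ha : 0 < a) (hab : a ≤ b) :
    a/(a+Q) ≤ b/(b+Q) := by
  have hb : 0 < b := lt_of_lt_of_le ha hab
  rw [div_le_div_iff₀ (by positivity) (by positivity)]
  nlinarith

lemma psi_entry (hQ : 0 < Q) : ∀ m (s c : ℝ), 0 < s → s/(s+Q) ≤ c →
    psi Q m s s c = phin Q m s := by
  intro m
  induction m with
  | zero => intro s c _ _; rfl
  | succ m ih =>
    intro s c hs hc
    have hsQ : (0:ℝ) < s + Q := by positivity
    rw [psi, phin, min_eq_right hc]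
    have h1 : s * (s/(s+Q)) = s^2/(s+Q) := by ring
    have h2 : s - Q * (s/(s+Q)) = s^2/(s+Q) := by field_simp; ring
    rw [h1, h2]
    refine ih _ _ (by positivity) ?_
    have hle : s^2/(s+Q) ≤ s := by rw [div_le_iff₀ hsQ]; nlinarith
    calc s^2/(s+Q) / (s^2/(s+Q) + Q) ≤ s/(s+Q) :=
      frac_mono hQ (by positivity) hle

lemma pow_sub_le {z z' : ℝ} (hz : 0 ≤ z) (hzz' : z ≤ z') :
    ∀ k : ℕ, z'^(k+1) - z^(k+1) ≤ ((k:ℝ)+1) * z'^k * (z'-z) := by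
  intro k
  induction k with
  | zero => simp
  | succ k ih =>
    have hz' : 0 ≤ z' := hz.trans hzz'
    have hple : z^(k+1) ≤ z'^(k+1) := pow_le_pow_left₀ hz hzz' _
    have h1 : z'^(k+2) - z^(k+2) = z' * (z'^(k+1) - z^(k+1)) + z^(k+1) * (z'-z) := by ring
    have h2 : z' * (z'^(k+1) - z^(k+1)) ≤ z' * (((k:ℝ)+1) * z'^k * (z'-z)) :=
      mul_le_mul_of_nonneg_left ih hz'
    have h3 : z^(k+1) * (z'-z) ≤ z'^(k+1) * (z'-z) :=
      mul_le_mul_of_nonneg_right hple (by linarith)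
    have h4 : z' * (((k:ℝ)+1) * z'^k * (z'-z)) + z'^(k+1)*(z'-z)
        = (((k:ℝ)+1)+1)*z'^(k+1)*(z'-z) := by ring
    push_cast
    linarith

lemma psi_capped_val (hQ : 0 < Q) (m k : ℕ) (p t ζ : ℝ) (hp : 0 < p) (hζ : 0 < ζ)
    (hcap : p*ζ^(k+2) + ((k:ℝ)+2)*Q*ζ ≤ t) :
    psi Q (m+1) (p*ζ^(k+1)) (t - ((k:ℝ)+1)*Q*ζ) ζ
      = psi Q m (p*ζ^(k+1+1)) (t - ((↑(k+1):ℝ)+1)*Q*ζ) ζ := by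
  have hPQ : (0:ℝ) < p*ζ^(k+1) + Q := by positivity
  have hmin : min ζ ((t - ((k:ℝ)+1)*Q*ζ)/(p*ζ^(k+1)+Q)) = ζ := by
    refine min_eq_left ?_
    rw [le_div_iff₀ hPQ]
    have hr : ζ*(p*ζ^(k+1)+Q) = p*ζ^(k+2) + Q*ζ := by ring
    rw [hr]
    nlinarith [hcap]
  rw [psi, hmin]
  have e1 : p*ζ^(k+1) * ζ = p*ζ^(k+1+1) := by ring
  have e2 : t - ((k:ℝ)+1)*Q*ζ - Q*ζ = t - ((↑(k+1):ℝ)+1)*Q*ζ := by push_cast; ring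
  rw [e1, e2]

lemma psi_uncapped_val (hQ : 0 < Q) (m k : ℕ) (p t ζ : ℝ) (hp : 0 < p) (hζ : 0 < ζ)
    (hPT : p*ζ^(k+1) ≤ t - ((k:ℝ)+1)*Q*ζ)
    (hunc : t ≤ p*ζ^(k+2) + ((k:ℝ)+2)*Q*ζ) :
    psi Q (m+1) (p*ζ^(k+1)) (t - ((k:ℝ)+1)*Q*ζ) ζ
      = phin Q m ((p*ζ^(k+1)) * (t - ((k:ℝ)+1)*Q*ζ) / (p*ζ^(k+1) + Q)) := by
  set P := p*ζ^(k+1) with hPdef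
  set T := t - ((k:ℝ)+1)*Q*ζ with hTdef
  have hP : 0 < P := by positivity
  have hT : 0 < T := lt_of_lt_of_le hP hPT
  have hPQ : (0:ℝ) < P + Q := by positivity
  have hmin : min ζ (T/(P+Q)) = T/(P+Q) := by
    refine min_eq_right ?_
    rw [div_le_iff₀ hPQ]
    have : ζ * (P + Q) = p*ζ^(k+2) + Q*ζ := by rw [hPdef]; ring
    rw [this, hTdef]
    nlinarith [hunc]
  rw [psi, hmin]
  have e1 : P * (T/(P+Q)) = P*T/(P+Q) := by ring
  have e2 : T - Q * (T/(P+Q)) = P*T/(P+Q) := by field_simp; ring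
  rw [e1, e2]
  have hs : 0 < P*T/(P+Q) := by positivity
  refine psi_entry hQ m _ _ hs ?_
  have hsT : P*T/(P+Q) ≤ T := by
    rw [div_le_iff₀ hPQ]; nlinarith
  have h5 : P*T/(P+Q) / (P*T/(P+Q) + Q) ≤ T/(T+Q) := frac_mono hQ hs hsT
  have h6 : T/(T+Q) ≤ T/(P+Q) := by
    rw [div_le_div_iff₀ (by positivity) hPQ]
    nlinarith
  linarith

lemma s_lt (hQ : 0 < Q) (k : ℕ) (p t z z' : ℝ) (hp : 0 < p) (hz : 0 < z) (hzz' : z < z')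
    (hdom : p*z'^(k+1) + ((k:ℝ)+1)*Q*z' ≤ t)
    (huncz : t ≤ p*z^(k+2) + ((k:ℝ)+2)*Q*z) :
    (p*z'^(k+1)) * (t - ((k:ℝ)+1)*Q*z') / (p*z'^(k+1) + Q)
      < (p*z^(k+1)) * (t - ((k:ℝ)+1)*Q*z) / (p*z^(k+1) + Q) := by
  have hz' : 0 < z' := hz.trans hzz'
  set A := z^(k+1) with hA
  set A' := z'^(k+1) with hA'
  set T := t - ((k:ℝ)+1)*Q*z with hT
  set T' := t - ((k:ℝ)+1)*Q*z' with hT'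
  have hApos : 0 < A := by positivity
  have hA'pos : 0 < A' := by positivity
  have hT'pos : 0 < T' := by
    have : 0 < p*A' := by positivity
    rw [hT']; rw [hA'] at this; linarith
  have hTT' : T' < T := by
    rw [hT, hT']
    have : ((k:ℝ)+1)*Q*z < ((k:ℝ)+1)*Q*z' := by
      have hpos : (0:ℝ) < ((k:ℝ)+1)*Q := by positivity
      nlinarith
    linarith
  have hTpos : 0 < T := hT'pos.trans hTT'
  have hAA' : A' - A ≤ ((k:ℝ)+1) * z'^k * (z'-z) := pow_sub_le hz.le hzz'.le k
  have hTz : T ≤ z*(p*A+Q) := by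
    have : z*(p*A+Q) = p*z^(k+2) + Q*z := by rw [hA]; ring
    rw [this, hT]; nlinarith [huncz]
  have key : T * (A' - A) < ((k:ℝ)+1) * (z'-z) * (A' * (p*A+Q)) := by
    have hD : 0 < z' - z := by linarith
    have hfac : (0:ℝ) < ((k:ℝ)+1) * z'^k * (z'-z) + 1 := by positivity
    have step1 : T * (A' - A) ≤ T * (((k:ℝ)+1) * z'^k * (z'-z)) :=
      mul_le_mul_of_nonneg_left hAA' hTpos.le
    have step2 : T * (((k:ℝ)+1) * z'^k * (z'-z)) ≤ z*(p*A+Q) * (((k:ℝ)+1) * z'^k * (z'-z)) :=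
      mul_le_mul_of_nonneg_right hTz (by positivity)
    have step3 : z*(p*A+Q) * (((k:ℝ)+1) * z'^k * (z'-z))
        < z'*(p*A+Q) * (((k:ℝ)+1) * z'^k * (z'-z)) := by
      have hposf : (0:ℝ) < (p*A+Q) * (((k:ℝ)+1) * z'^k * (z'-z)) := by positivity
      nlinarith
    have step4 : z'*(p*A+Q) * (((k:ℝ)+1) * z'^k * (z'-z))
        = ((k:ℝ)+1) * (z'-z) * (A' * (p*A+Q)) := by rw [hA']; ring
    linarith
  rw [div_lt_div_iff₀ (by positivity) (by positivity)]
  have hid : (p*A)*T*((p*A')+Q) - (p*A')*T'*((p*A)+Q)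
      = p*Q*(((k:ℝ)+1)*(z'-z)*(A'*(p*A+Q)) - T*(A'-A)) := by
    rw [hT, hT']; ring
  nlinarith [mul_pos hp hQ, key, hid]

lemma psi_key (hQ : 0 < Q) : ∀ m (k : ℕ) (p t z z' : ℝ), 0 < p → 0 < z → z < z' →
    p*z'^(k+1) + ((k:ℝ)+1)*Q*z' ≤ t →
    psi Q m (p*z'^(k+1)) (t - ((k:ℝ)+1)*Q*z') z' < psi Q m (p*z^(k+1)) (t - ((k:ℝ)+1)*Q*z) z := by
  intro m
  induction m with
  | zero =>
    intro k p t z z' hp hz hzz' hdom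
    show t - ((k:ℝ)+1)*Q*z' < t - ((k:ℝ)+1)*Q*z
    have hpos : (0:ℝ) < ((k:ℝ)+1)*Q := by positivity
    nlinarith
  | succ m ih =>
    intro k p t z z' hp hz hzz' hdom
    have hz' : 0 < z' := hz.trans hzz'
    have hPT' : p*z'^(k+1) ≤ t - ((k:ℝ)+1)*Q*z' := by nlinarith [hdom]
    have hPTz : p*z^(k+1) ≤ t - ((k:ℝ)+1)*Q*z := by
      have h1 : p*z^(k+1) ≤ p*z'^(k+1) :=
        mul_le_mul_of_nonneg_left (pow_le_pow_left₀ hz.le hzz'.le _) hp.le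
      have h2 : ((k:ℝ)+1)*Q*z ≤ ((k:ℝ)+1)*Q*z' := by
        have : (0:ℝ) ≤ ((k:ℝ)+1)*Q := by positivity
        nlinarith
      linarith
    rcases le_or_gt (p*z'^(k+2) + ((k:ℝ)+2)*Q*z') t with hA | hA'
    · -- both capped
      have hcz : p*z^(k+2) + ((k:ℝ)+2)*Q*z ≤ t := by
        have h1 : p*z^(k+2) ≤ p*z'^(k+2) :=
          mul_le_mul_of_nonneg_left (pow_le_pow_left₀ hz.le hzz'.le _) hp.le
        have h2 : ((k:ℝ)+2)*Q*z ≤ ((k:ℝ)+2)*Q*z' := by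
          have : (0:ℝ) ≤ ((k:ℝ)+2)*Q := by positivity
          nlinarith
        linarith
      rw [psi_capped_val hQ m k p t z' hp hz' hA, psi_capped_val hQ m k p t z hp hz hcz]
      exact ih (k+1) p t z z' hp hz hzz' (by push_cast; linarith [hA])
    · rcases le_or_gt t (p*z^(k+2) + ((k:ℝ)+2)*Q*z) with hB | hC
      · -- both uncapped
        rw [psi_uncapped_val hQ m k p t z' hp hz' hPT' hA'.le,
            psi_uncapped_val hQ m k p t z hp hz hPTz hB]
        have hT' : 0 < t - ((k:ℝ)+1)*Q*z' := lt_of_lt_of_le (by positivity) hPT'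
        refine phin_lt hQ m _ _ (div_pos (mul_pos (by positivity) hT') (by positivity)) ?_
        exact s_lt hQ k p t z z' hp hz hzz' hdom hB
      · -- IVT case
        set g : ℝ → ℝ := fun ζ => p*ζ^(k+2) + ((k:ℝ)+2)*Q*ζ with hg
        have hgc : Continuous g := by
          rw [hg]; continuity
        have hsub : Set.Icc (g z) (g z') ⊆ g '' Set.Icc z z' :=
          intermediate_value_Icc hzz'.le hgc.continuousOn
        obtain ⟨zb, hzbmem, hgzb⟩ := hsub ⟨hC.le, hA'.le⟩
        obtain ⟨hzzb, hzbz'⟩ := hzbmem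
        have hzb : 0 < zb := lt_of_lt_of_le hz hzzb
        have hzzb' : z < zb := by
          rcases eq_or_lt_of_le hzzb with rfl | h
          · exact absurd hgzb (by simp [hg] at hC ⊢; linarith)
          · exact h
        have hzbz'' : zb < z' := by
          rcases eq_or_lt_of_le hzbz' with rfl | h
          · exact absurd hgzb (by simp [hg] at hA' ⊢; linarith)
          · exact h
        have hgzb' : p*zb^(k+2) + ((k:ℝ)+2)*Q*zb = t := by
          simpa [hg] using hgzb
        have hPTzb : p*zb^(k+1) ≤ t - ((k:ℝ)+1)*Q*zb := by
          have h1 : p*zb^(k+1) ≤ p*z'^(k+1) :=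
            mul_le_mul_of_nonneg_left (pow_le_pow_left₀ hzb.le hzbz''.le _) hp.le
          have h2 : ((k:ℝ)+1)*Q*zb ≤ ((k:ℝ)+1)*Q*z' := by
            have : (0:ℝ) ≤ ((k:ℝ)+1)*Q := by positivity
            nlinarith
          linarith
        have e1 := psi_uncapped_val hQ m k p t z' hp hz' hPT' hA'.le
        have e2 := psi_uncapped_val hQ m k p t zb hp hzb hPTzb (le_of_eq hgzb'.symm)
        have e3 := psi_capped_val hQ m k p t zb hp hzb (le_of_eq hgzb')
        have e4 := psi_capped_val hQ m k p t z hp hz hC.le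
        have hslt := s_lt hQ k p t zb z' hp hzb hzbz'' hdom (le_of_eq hgzb'.symm)
        have hT'zb : 0 < t - ((k:ℝ)+1)*Q*zb := lt_of_lt_of_le (by positivity) hPTzb
        have step1 : psi Q (m+1) (p*z'^(k+1)) (t - ((k:ℝ)+1)*Q*z') z'
            < psi Q (m+1) (p*zb^(k+1)) (t - ((k:ℝ)+1)*Q*zb) zb := by
          have hT'pos : 0 < t - ((k:ℝ)+1)*Q*z' := lt_of_lt_of_le (by positivity) hPT'
          rw [e1, e2]
          exact phin_lt hQ m _ _ (div_pos (mul_pos (by positivity) hT'pos) (by positivity)) hslt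
        have step2 : psi Q (m+1) (p*zb^(k+1)) (t - ((k:ℝ)+1)*Q*zb) zb
            < psi Q (m+1) (p*z^(k+1)) (t - ((k:ℝ)+1)*Q*z) z := by
          rw [e3, e4]
          exact ih (k+1) p t z zb hp hz hzzb' (by push_cast; linarith [hgzb'.le])
        exact step1.trans step2

noncomputable def gre (Q : ℝ) : ℕ → ℝ → ℝ → ℝ → ℝ
  | 0, p, t, b => min b (t/(p+Q))
  | k+1, p, t, b => gre Q k (p * min b (t/(p+Q))) (t - Q * min b (t/(p+Q))) (min b (t/(p+Q)))

lemma psi_bound (hQ : 0 < Q) : ∀ m (p t b : ℝ) (w : ℕ → ℝ), 0 < p → 0 < b →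
    (∀ i, i < m → 0 < w i) → (0 < m → w 0 ≤ b) →
    (∀ i j, i ≤ j → j < m → w j ≤ w i) →
    (∀ k, 1 ≤ k → k ≤ m → p * ∏ i ∈ range k, w i ≤ t - Q * ∑ i ∈ range k, w i) →
    psi Q m p t b ≤ t - Q * ∑ i ∈ range m, w i ∧
      (t - Q * ∑ i ∈ range m, w i = psi Q m p t b → ∀ k, k < m → w k = gre Q k p t b) := by
  intro m
  induction m with
  | zero =>
    intro p t b w hp hb _ _ _ _
    constructor
    · simp [psi]
    · intro _ k hk; exact absurd hk (Nat.not_lt_zero k)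
  | succ m ih =>
    intro p t b w hp hb hwpos hw0b hmono hcon
    have hw0 : 0 < w 0 := hwpos 0 (Nat.succ_pos m)
    have hcon1 : p * w 0 ≤ t - Q * w 0 := by
      have h := hcon 1 le_rfl (by omega)
      simpa using h
    have hpQ : 0 < p + Q := by positivity
    have hw0div : w 0 ≤ t / (p + Q) := by rw [le_div_iff₀ hpQ]; nlinarith
    have hw0zs : w 0 ≤ min b (t/(p+Q)) := le_min (hw0b (Nat.succ_pos m)) hw0div
    have hzspos : 0 < min b (t/(p+Q)) := lt_of_lt_of_le hw0 hw0zs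
    have hzsdiv : min b (t/(p+Q)) ≤ t/(p+Q) := min_le_right _ _
    have htail := ih (p * w 0) (t - Q * w 0) (w 0) (fun i => w (i+1)) (by positivity) hw0
      (fun i hi => hwpos (i+1) (by omega))
      (fun _ => hmono 0 1 (by omega) (by omega))
      (fun i j hij hj => hmono (i+1) (j+1) (by omega) (by omega))
      (by
        intro k hk1 hkm
        have hck := hcon (k+1) (by omega) (by omega)
        rw [Finset.prod_range_succ', Finset.sum_range_succ'] at hck
        ring_nf at hck ⊢
        linarith)
    obtain ⟨hle', heq'⟩ := htail
    have hsumsplit : ∑ i ∈ range (m+1), w i = (∑ i ∈ range m, w (i+1)) + w 0 :=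
      Finset.sum_range_succ' w m
    have hdom' : p * (min b (t/(p+Q)))^(0+1) + (((0:ℕ):ℝ)+1)*Q*(min b (t/(p+Q))) ≤ t := by
      rw [le_div_iff₀ hpQ] at hzsdiv
      push_cast
      nlinarith [hzsdiv]
    have hkey : psi Q m (p * min b (t/(p+Q))) (t - Q*(min b (t/(p+Q)))) (min b (t/(p+Q)))
        ≤ psi Q m (p * w 0) (t - Q*(w 0)) (w 0) := by
      rcases eq_or_lt_of_le hw0zs with heq | hlt
      · rw [← heq]
      · have h := psi_key hQ m 0 p t (w 0) (min b (t/(p+Q))) hp hw0 hlt hdom'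
        have e : ∀ y : ℝ, p*y^(0+1) = p*y := by intro y; ring
        rw [e, e] at h
        have e2 : ∀ y : ℝ, t - (((0:ℕ):ℝ)+1)*Q*y = t - Q*y := by intro y; push_cast; ring
        rw [e2, e2] at h
        exact h.le
    have hpsistep : psi Q (m+1) p t b
        = psi Q m (p * min b (t/(p+Q))) (t - Q*(min b (t/(p+Q)))) (min b (t/(p+Q))) := by
      rw [psi]
    constructor
    · rw [hpsistep, hsumsplit]
      have h2 := hle'
      have h3 := hkey
      ring_nf at h2 h3 ⊢
      linarith
    · intro heq k hk
      have hw0eq : w 0 = min b (t/(p+Q)) := by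
        by_contra hne
        have hlt : w 0 < min b (t/(p+Q)) := lt_of_le_of_ne hw0zs hne
        have h := psi_key hQ m 0 p t (w 0) (min b (t/(p+Q))) hp hw0 hlt hdom'
        have e : ∀ y : ℝ, p*y^(0+1) = p*y := by intro y; ring
        rw [e, e] at h
        have e2 : ∀ y : ℝ, t - (((0:ℕ):ℝ)+1)*Q*y = t - Q*y := by intro y; push_cast; ring
        rw [e2, e2] at h
        rw [hpsistep] at heq
        rw [hsumsplit] at heq
        have := hle'
        nlinarith [h, hle']
      have heqtail : (t - Q * w 0) - Q * ∑ i ∈ range m, w (i+1)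
          = psi Q m (p * w 0) (t - Q*(w 0)) (w 0) := by
        rw [hpsistep, ← hw0eq] at heq
        rw [hsumsplit] at heq
        linarith
      have hgrek := heq' heqtail
      match k, hk with
      | 0, _ =>
        rw [gre, hw0eq]
      | (k+1), hk =>
        have := hgrek k (by omega)
        rw [gre, ← hw0eq]
        exact this

end core

theorem stmt_9 (d q : ℕ) (hd : 1 ≤ d) (hq : 1 ≤ q) (u : ℕ → ℕ)
    (hu1 : u 1 = q) (hurec : ∀ p ≥ 1, u (p + 1) = u p * (1 + u p))
    (x : ℕ → ℝ)
    (hxpos : ∀ i, 1 ≤ i → i ≤ d → 0 < x i)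
    (hxmono : ∀ i j, 1 ≤ i → i ≤ j → j ≤ d → x j ≤ x i)
    (hconstr : ∀ l, 1 ≤ l → l ≤ d →
      ∏ i ∈ Finset.Icc 1 l, x i ≤ 1 - q * ∑ i ∈ Finset.Icc 1 l, x i)
    (hsum : ∑ i ∈ Finset.Icc 1 d, x i = ∑ i ∈ Finset.Icc 1 d, (1 : ℝ) / (1 + u i)) :
    ∀ i, 1 ≤ i → i ≤ d → x i = 1 / (1 + u i) := by
  have hQ : (0:ℝ) < (q:ℝ) := by exact_mod_cast Nat.lt_of_lt_of_le Nat.zero_lt_one hq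
  set Q : ℝ := (q:ℝ) with hQdef
  have hu_ge : ∀ n : ℕ, 1 ≤ u (n+1) := by
    intro n
    induction n with
    | zero => simpa [hu1] using hq
    | succ n ih =>
      rw [hurec (n+1) (by omega)]
      calc 1 ≤ u (n+1) := ih
        _ ≤ u (n+1) * (1 + u (n+1)) := Nat.le_mul_of_pos_right _ (by omega)
  have hUpos : ∀ n : ℕ, (0:ℝ) < ((u (n+1)) : ℝ) := by
    intro n
    have : 0 < u (n+1) := hu_ge n
    exact_mod_cast this
  have hfrac : ∀ a : ℝ, 0 < a → (Q/a)/((Q/a)+Q) = 1/(1+a) := by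
    intro a ha
    rw [div_eq_div_iff (by positivity) (by positivity)]
    field_simp
  have hUrec : ∀ n : ℕ, ((u (n+2)) : ℝ) = ((u (n+1)):ℝ) * (1 + ((u (n+1)):ℝ)) := by
    intro n
    rw [hurec (n+1) (by omega)]
    push_cast
    ring
  have phin_val : ∀ mm j : ℕ, phin Q mm (Q/((u (j+1)):ℝ)) = Q/((u (j+1+mm)):ℝ) := by
    intro mm
    induction mm with
    | zero => intro j; simp [phin]
    | succ mm ih =>
      intro j
      have ha : (0:ℝ) < ((u (j+1)):ℝ) := hUpos j
      rw [phin]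
      have e : (Q/((u (j+1)):ℝ))^2/((Q/((u (j+1)):ℝ))+Q) = Q/((u (j+2)):ℝ) := by
        rw [hUrec j]
        rw [div_eq_div_iff (by positivity) (by positivity)]
        field_simp
      rw [e, ih (j+1)]
      have : j+1+1+mm = j+1+(mm+1) := by omega
      rw [this]
  have gre_val : ∀ k j : ℕ, ∀ c : ℝ, 1/(1+((u (j+1)):ℝ)) ≤ c →
      gre Q k (Q/((u (j+1)):ℝ)) (Q/((u (j+1)):ℝ)) c = 1/(1+((u (j+1+k)):ℝ)) := by
    intro k
    induction k with
    | zero =>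
      intro j c hc
      have ha : (0:ℝ) < ((u (j+1)):ℝ) := hUpos j
      rw [gre, hfrac _ ha, min_eq_right hc]
    | succ k ih =>
      intro j c hc
      have ha : (0:ℝ) < ((u (j+1)):ℝ) := hUpos j
      rw [gre, hfrac _ ha, min_eq_right hc]
      have e1 : (Q/((u (j+1)):ℝ)) * (1/(1+((u (j+1)):ℝ))) = Q/((u (j+2)):ℝ) := by
        rw [hUrec j]
        field_simp
      have e2 : (Q/((u (j+1)):ℝ)) - Q*(1/(1+((u (j+1)):ℝ))) = Q/((u (j+2)):ℝ) := by
        rw [hUrec j]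
        field_simp
        ring
      rw [e1, e2]
      have hmonu : ((u (j+1)):ℝ) ≤ ((u (j+2)):ℝ) := by
        rw [hUrec j]
        nlinarith [hUpos j]
      have hcap : 1/(1+((u (j+2)):ℝ)) ≤ 1/(1+((u (j+1)):ℝ)) := by
        apply one_div_le_one_div_of_le
        · linarith [hUpos j]
        · linarith
      have := ih (j+1) (1/(1+((u (j+1)):ℝ))) hcap
      rw [this]
      have : j+1+1+k = j+1+(k+1) := by omega
      rw [this]
  have hconv_sum : ∀ (f : ℕ → ℝ) (n : ℕ),
      ∑ i ∈ Icc 1 n, f i = ∑ i ∈ range n, f (i+1) := by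
    intro f n
    induction n with
    | zero => simp
    | succ n ih => rw [Finset.sum_Icc_succ_top (by omega), Finset.sum_range_succ, ih]
  have hconv_prod : ∀ (f : ℕ → ℝ) (n : ℕ),
      ∏ i ∈ Icc 1 n, f i = ∏ i ∈ range n, f (i+1) := by
    intro f n
    induction n with
    | zero => simp
    | succ n ih => rw [Finset.prod_Icc_succ_top (by omega), Finset.prod_range_succ, ih]
  have sum_y : ∀ l : ℕ, 1 - Q * ∑ i ∈ Icc 1 l, 1/(1+((u i):ℝ)) = Q/((u (l+1)):ℝ) := by
    intro l
    induction l with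
    | zero =>
      simp [hu1]
      exact (div_self hQ.ne').symm
    | succ l ih =>
      rw [Finset.sum_Icc_succ_top (by omega)]
      have ha : (0:ℝ) < ((u (l+1)):ℝ) := hUpos l
      have key : Q/((u (l+1)):ℝ) - Q*(1/(1+((u (l+1)):ℝ))) = Q/((u (l+2)):ℝ) := by
        rw [hUrec l]
        field_simp
        ring
      rw [mul_add]
      linarith [ih, key]
  have hb : (0:ℝ) < 1/(1+Q) := by positivity
  have hx1b : x 1 ≤ 1/(1+Q) := by
    have h := hconstr 1 le_rfl hd
    simp [Finset.Icc_self] at h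
    rw [le_div_iff₀ (by positivity)]
    nlinarith [h]
  have happ := psi_bound hQ d 1 1 (1/(1+Q)) (fun i => x (i+1)) one_pos hb
    (fun i hi => hxpos (i+1) (by omega) (by omega))
    (fun _ => hx1b)
    (fun i j hij hj => hxmono (i+1) (j+1) (by omega) (by omega) (by omega))
    (by
      intro k hk1 hkd
      have h := hconstr k hk1 hkd
      rw [hconv_prod x k, hconv_sum x k] at h
      rw [one_mul]
      exact h)
  obtain ⟨hle, heq⟩ := happ
  have hQu1 : Q/((u 1):ℝ) = 1 := by rw [hu1]; exact div_self hQ.ne'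
  have hpsiroot : psi Q d 1 1 (1/(1+Q)) = Q/((u (d+1)):ℝ) := by
    have h1 : psi Q d 1 1 (1/(1+Q)) = phin Q d 1 := psi_entry hQ d 1 (1/(1+Q)) one_pos le_rfl
    have h2 := phin_val d 0
    simp only [Nat.zero_add] at h2
    rw [hQu1] at h2
    have h3 : 1+d = d+1 := by omega
    rw [h3] at h2
    exact h1.trans h2
  have hsum_eq : 1 - Q * ∑ i ∈ range d, x (i+1) = psi Q d 1 1 (1/(1+Q)) := by
    rw [← hconv_sum x d, hsum, sum_y d, hpsiroot]
  intro i hi1 hid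
  obtain ⟨k, rfl⟩ : ∃ k, i = k+1 := ⟨i-1, by omega⟩
  have hx := heq hsum_eq k (by omega)
  have hg := gre_val k 0 (1/(1+Q)) (by simp [hu1]; exact le_rfl)
  simp only [Nat.zero_add] at hg
  rw [hQu1] at hg
  have h4 : 1+k = k+1 := by omega
  rw [h4] at hg
  exact hx.trans hg
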